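/- For every b ∈ (0, π/2), I₂(b) = ∫_{−1}^{1} (1 − x² sin²b)/(√(1−x²)·√(1 + cos²b − x² sin²b)) dx < π/√2, with equality in the limit b → 0⁺ where I₂(0) = π/√2. -/

import Mathlib

open Real Set intervalIntegral

/-- `I₂(b) = ∫_{−1}^{1} (1 − x² sin²b)/(√(1−x²) √(1 + cos²b − x² sin²b)) dx`. -/
noncomputable def I₂ (b : ℝ) : ℝ :=
  ∫ x in (-1 : ℝ)..1, (1 - x ^ 2 * Real.sin b ^ 2) /
    (Real.sqrt (1 - x ^ 2) * Real.sqrt (1 + Real.cos b ^ 2 - x ^ 2 * Real.sin b ^ 2))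

open MeasureTheory

lemma intInt_one_div_sqrt :
    IntervalIntegrable (fun x : ℝ => 1 / Real.sqrt (1 - x ^ 2)) volume (-1) 1 := by
  apply intervalIntegrable_deriv_of_nonneg (g := Real.arcsin)
  · exact Real.continuous_arcsin.continuousOn
  · intro x hx
    rw [min_eq_left (by norm_num : (-1:ℝ) ≤ 1), max_eq_right (by norm_num : (-1:ℝ) ≤ 1)] at hx
    exact Real.hasDerivAt_arcsin (ne_of_gt hx.1) (ne_of_lt hx.2)
  · intro x _; positivity

lemma integral_one_div_sqrt :
    ∫ x in (-1:ℝ)..1, 1 / Real.sqrt (1 - x ^ 2) = π := by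
  rw [integral_eq_sub_of_hasDeriv_right (f := Real.arcsin)
    Real.continuous_arcsin.continuousOn (fun x hx => ?_) intInt_one_div_sqrt]
  · rw [Real.arcsin_one, Real.arcsin_neg_one]; ring
  · rw [min_eq_left (by norm_num : (-1:ℝ) ≤ 1), max_eq_right (by norm_num : (-1:ℝ) ≤ 1)] at hx
    exact (Real.hasDerivAt_arcsin (ne_of_gt hx.1) (ne_of_lt hx.2)).hasDerivWithinAt

lemma intInt_sqrt : IntervalIntegrable (fun x : ℝ => Real.sqrt (1 - x ^ 2)) volume (-1) 1 :=
  (Real.continuous_sqrt.comp (by continuity)).intervalIntegrable _ _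

lemma intInt_sq_div_sqrt :
    IntervalIntegrable (fun x : ℝ => x ^ 2 / Real.sqrt (1 - x ^ 2)) volume (-1) 1 := by
  have h := intInt_one_div_sqrt.continuousOn_mul (g := fun x : ℝ => x ^ 2)
    (continuous_pow 2).continuousOn
  have : (fun x : ℝ => x ^ 2 * (1 / Real.sqrt (1 - x ^ 2)))
      = fun x : ℝ => x ^ 2 / Real.sqrt (1 - x ^ 2) := by
    funext x; ring
  rwa [this] at h

lemma integral_sq_div_sqrt :
    ∫ x in (-1:ℝ)..1, x ^ 2 / Real.sqrt (1 - x ^ 2) = π / 2 := by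
  have heq : EqOn (fun x : ℝ => x ^ 2 / Real.sqrt (1 - x ^ 2))
      (fun x : ℝ => 1 / Real.sqrt (1 - x ^ 2) - Real.sqrt (1 - x ^ 2)) (uIcc (-1:ℝ) 1) := by
    intro x hx
    rw [uIcc_of_le (by norm_num : (-1:ℝ) ≤ 1)] at hx
    have h0 : 0 ≤ 1 - x ^ 2 := by nlinarith [hx.1, hx.2]
    rcases eq_or_lt_of_le h0 with h | h
    · simp only [← h, Real.sqrt_zero, div_zero, sub_zero]
    · have hs : 0 < Real.sqrt (1 - x ^ 2) := Real.sqrt_pos.2 h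
      have hmul : Real.sqrt (1 - x ^ 2) * Real.sqrt (1 - x ^ 2) = 1 - x ^ 2 :=
        Real.mul_self_sqrt h0
      field_simp
      rw [Real.sq_sqrt h0]; ring
  rw [integral_congr heq, integral_sub intInt_one_div_sqrt intInt_sqrt,
    integral_one_div_sqrt, integral_sqrt_one_sub_sq]
  ring

lemma tangent_ineq (c t t₀ : ℝ) (hc : 0 < c) (ht : 0 ≤ t) (ht₀ : 0 ≤ t₀) :
    t / Real.sqrt (t + c ^ 2) ≤ t₀ / Real.sqrt (t₀ + c ^ 2)
      + (t₀ + 2 * c ^ 2) / (2 * Real.sqrt (t₀ + c ^ 2) ^ 3) * (t - t₀) := by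
  set u := Real.sqrt (t + c ^ 2) with hu
  set u₀ := Real.sqrt (t₀ + c ^ 2) with hu₀
  have hupos : 0 < u := Real.sqrt_pos.2 (by positivity)
  have hu₀pos : 0 < u₀ := Real.sqrt_pos.2 (by positivity)
  have h1 : u ^ 2 = t + c ^ 2 := Real.sq_sqrt (by positivity)
  have h2 : u₀ ^ 2 = t₀ + c ^ 2 := Real.sq_sqrt (by positivity)
  have ht' : t = u ^ 2 - c ^ 2 := by linarith
  have ht₀' : t₀ = u₀ ^ 2 - c ^ 2 := by linarith
  rw [ht', ht₀']
  rw [← sub_nonneg]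
  have expand : (u₀ ^ 2 - c ^ 2) / u₀
      + (u₀ ^ 2 - c ^ 2 + 2 * c ^ 2) / (2 * u₀ ^ 3) * (u ^ 2 - c ^ 2 - (u₀ ^ 2 - c ^ 2))
      - (u ^ 2 - c ^ 2) / u
      = (u - u₀) ^ 2 * (u₀ ^ 2 * u + c ^ 2 * u + 2 * c ^ 2 * u₀) / (2 * u₀ ^ 3 * u) := by
    field_simp
    ring
  rw [expand]
  positivity

set_option maxHeartbeats 1000000 in
/-- For every `b ∈ (0, π/2)`, `I₂(b) < π/√2`, while `I₂(0) = π/√2`. -/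
theorem I2_lt_pi_div_sqrt_two :
    (∀ b ∈ Ioo 0 (π / 2), I₂ b < π / Real.sqrt 2) ∧ I₂ 0 = π / Real.sqrt 2 := by
  constructor
  · intro b hb
    obtain ⟨hb0, hb2⟩ := hb
    have hpi := Real.pi_pos
    simp only [I₂]
    set s := Real.sin b with hsdef
    set c := Real.cos b with hcdef
    have hs : 0 < s := Real.sin_pos_of_pos_of_lt_pi hb0 (by linarith)
    have hc : 0 < c := Real.cos_pos_of_mem_Ioo ⟨by linarith, hb2⟩
    have hsc : s ^ 2 + c ^ 2 = 1 := Real.sin_sq_add_cos_sq b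
    have hc1 : c ^ 2 < 1 := by nlinarith
    set t₀ : ℝ := (1 + c ^ 2) / 2 with ht₀def
    have ht₀pos : 0 < t₀ := by rw [ht₀def]; positivity
    set u₀ : ℝ := Real.sqrt (t₀ + c ^ 2) with hu₀def
    have hu₀ : 0 < u₀ := Real.sqrt_pos.2 (by positivity)
    set B : ℝ := (t₀ + 2 * c ^ 2) / (2 * u₀ ^ 3) with hBdef
    set A : ℝ := t₀ / u₀ - B * t₀ with hAdef
    -- tangent line bound
    have tang : ∀ t : ℝ, 0 ≤ t → t / Real.sqrt (t + c ^ 2) ≤ A + B * t := by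
      intro t ht
      have h := tangent_ineq c t t₀ hc ht ht₀pos.le
      have hr : A + B * t = t₀ / u₀ + B * (t - t₀) := by rw [hAdef]; ring
      rw [hr, hBdef, hu₀def]
      exact h
    set g : ℝ → ℝ := fun x => (A + B * (1 - x ^ 2 * s ^ 2)) / Real.sqrt (1 - x ^ 2) with hgdef
    -- pointwise bound on [-1, 1]
    have hpt : ∀ x ∈ Icc (-1:ℝ) 1,
        (1 - x ^ 2 * s ^ 2) / (Real.sqrt (1 - x ^ 2) * Real.sqrt (1 + c ^ 2 - x ^ 2 * s ^ 2))
          ≤ g x := by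
      intro x hx
      have hx2 : x ^ 2 ≤ 1 := by nlinarith [hx.1, hx.2]
      have h0 : 0 ≤ 1 - x ^ 2 := by linarith
      rcases eq_or_lt_of_le h0 with h | h
      · simp only [hgdef, ← h, Real.sqrt_zero, zero_mul, div_zero]
        exact le_rfl
      · have hsq : 0 < Real.sqrt (1 - x ^ 2) := Real.sqrt_pos.2 h
        have htnn : 0 ≤ 1 - x ^ 2 * s ^ 2 := by nlinarith [sq_nonneg s, sq_nonneg c]
        have hrw : 1 + c ^ 2 - x ^ 2 * s ^ 2 = (1 - x ^ 2 * s ^ 2) + c ^ 2 := by ring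
        rw [hrw]
        have hsplit : (1 - x ^ 2 * s ^ 2)
            / (Real.sqrt (1 - x ^ 2) * Real.sqrt ((1 - x ^ 2 * s ^ 2) + c ^ 2))
            = ((1 - x ^ 2 * s ^ 2) / Real.sqrt ((1 - x ^ 2 * s ^ 2) + c ^ 2))
              / Real.sqrt (1 - x ^ 2) := by ring
        rw [hsplit, hgdef]
        rw [div_le_div_iff_of_pos_right hsq]
        exact tang _ htnn
    -- integrability of g
    have hIntg : IntervalIntegrable g volume (-1) 1 := by
      have h := intInt_one_div_sqrt.continuousOn_mul
        (g := fun x : ℝ => A + B * (1 - x ^ 2 * s ^ 2)) (by fun_prop)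
      have heq : (fun x : ℝ => (A + B * (1 - x ^ 2 * s ^ 2)) * (1 / Real.sqrt (1 - x ^ 2))) = g := by
        funext x; rw [hgdef]; ring
      rwa [heq] at h
    -- nonnegativity of g on [-1,1]
    have hgnn : ∀ x ∈ Icc (-1:ℝ) 1, 0 ≤ g x := by
      intro x hx
      have hx2 : x ^ 2 ≤ 1 := by nlinarith [hx.1, hx.2]
      have htnn : 0 ≤ 1 - x ^ 2 * s ^ 2 := by nlinarith [sq_nonneg s, sq_nonneg c]
      have hAB : 0 ≤ A + B * (1 - x ^ 2 * s ^ 2) := by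
        have := tang _ htnn
        have hnn : 0 ≤ (1 - x ^ 2 * s ^ 2) / Real.sqrt ((1 - x ^ 2 * s ^ 2) + c ^ 2) := by
          positivity
        exact hnn.trans this
      rw [hgdef]
      positivity
    -- integrability of the main integrand
    set F : ℝ → ℝ := fun x => (1 - x ^ 2 * s ^ 2) /
        (Real.sqrt (1 - x ^ 2) * Real.sqrt (1 + c ^ 2 - x ^ 2 * s ^ 2)) with hFdef
    have hFnn : ∀ x ∈ Icc (-1:ℝ) 1, 0 ≤ F x := by
      intro x hx
      have hx2 : x ^ 2 ≤ 1 := by nlinarith [hx.1, hx.2]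
      have htnn : 0 ≤ 1 - x ^ 2 * s ^ 2 := by nlinarith [sq_nonneg s, sq_nonneg c]
      rw [hFdef]
      positivity
    have hIntF : IntervalIntegrable F volume (-1) 1 := by
      apply hIntg.mono_fun'
      · apply Measurable.aestronglyMeasurable
        rw [hFdef]
        have m1 : Measurable fun x : ℝ => 1 - x ^ 2 * s ^ 2 := by fun_prop
        have m2 : Measurable fun x : ℝ => Real.sqrt (1 - x ^ 2) :=
          Real.continuous_sqrt.measurable.comp (by fun_prop)
        have m3 : Measurable fun x : ℝ => Real.sqrt (1 + c ^ 2 - x ^ 2 * s ^ 2) :=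
          Real.continuous_sqrt.measurable.comp (by fun_prop)
        exact m1.div (m2.mul m3)
      · filter_upwards [MeasureTheory.ae_restrict_mem measurableSet_uIoc] with x hx
        rw [uIoc_of_le (by norm_num : (-1:ℝ) ≤ 1)] at hx
        have hx' : x ∈ Icc (-1:ℝ) 1 := ⟨le_of_lt hx.1, hx.2⟩
        rw [Real.norm_of_nonneg (hFnn x hx')]
        exact hpt x hx'
    -- compute ∫ g
    have hsplitg : g = fun x : ℝ => (A + B) * (1 / Real.sqrt (1 - x ^ 2))
        - B * s ^ 2 * (x ^ 2 / Real.sqrt (1 - x ^ 2)) := by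
      funext x; rw [hgdef]; ring
    have hgint : ∫ x in (-1:ℝ)..1, g x = π * (A + B * t₀) := by
      rw [hsplitg, integral_sub (intInt_one_div_sqrt.const_mul _) (intInt_sq_div_sqrt.const_mul _),
        intervalIntegral.integral_const_mul, intervalIntegral.integral_const_mul, integral_one_div_sqrt, integral_sq_div_sqrt,
        ht₀def]
      linear_combination (-(π * B) / 2) * hsc
    -- final strict inequality
    have hfin : A + B * t₀ < 1 / Real.sqrt 2 := by
      have hA : A + B * t₀ = t₀ / u₀ := by rw [hAdef]; ring
      rw [hA, div_lt_div_iff₀ hu₀ (Real.sqrt_pos.2 (by norm_num))]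
      rw [one_mul, hu₀def]
      rw [show t₀ * Real.sqrt 2 = Real.sqrt 2 * t₀ by ring]
      have h2 : Real.sqrt 2 * t₀ = Real.sqrt (2 * t₀ ^ 2) := by
        rw [Real.sqrt_mul (by norm_num), Real.sqrt_sq ht₀pos.le]
      rw [h2]
      apply Real.sqrt_lt_sqrt (by positivity)
      rw [ht₀def]
      nlinarith [mul_pos (pow_pos hc 2) (show (0:ℝ) < 1 - c ^ 2 by linarith)]
    calc (∫ x in (-1:ℝ)..1, F x) ≤ ∫ x in (-1:ℝ)..1, g x :=
          integral_mono_on (by norm_num) hIntF hIntg hpt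
      _ = π * (A + B * t₀) := hgint
      _ < π * (1 / Real.sqrt 2) := by
          exact mul_lt_mul_of_pos_left hfin hpi
      _ = π / Real.sqrt 2 := by ring
  · simp only [I₂, Real.sin_zero, Real.cos_zero, one_pow]
    have heq : ∀ x : ℝ, (1 - x ^ 2 * 0 ^ 2) /
        (Real.sqrt (1 - x ^ 2) * Real.sqrt (1 + 1 - x ^ 2 * 0 ^ 2))
        = (Real.sqrt 2)⁻¹ * (1 / Real.sqrt (1 - x ^ 2)) := by
      intro x
      norm_num
    simp only [heq]
    rw [intervalIntegral.integral_const_mul, integral_one_div_sqrt]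
    rw [div_eq_mul_inv]
    ring
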